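/- Let m ≥ 4. If two 2-PL parameters (α, θ^(1), θ^(2)) and (α', θ'^(1), θ'^(2)), with α, α' ∈ (0,1), assign the same marginal probability to every ranked top-2 order a_{i_1} ≻ a_{i_2} ≻ others and to every 2-way order a_i ≻ a_j over every pair {a_i, a_j}, then their mixing measures coincide: α δ_{θ^(1)} + (1−α) δ_{θ^(2)} = α' δ_{θ'^(1)} + (1−α') δ_{θ'^(2)}. In other words, the mixture of two Plackett-Luce models over m ≥ 4 alternatives is identifiable (modulo label switching) from ranked top-2 data plus pairwise comparison data. -/

import Mathlib

set_option maxRecDepth 10000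
set_option maxHeartbeats 1000000


open Finset

/-- `θ` is a Plackett–Luce parameter over `m` alternatives: all entries are
strictly positive and they sum to one. -/
def IsPLParam {m : ℕ} (θ : Fin m → ℝ) : Prop :=
  (∀ i, 0 < θ i) ∧ (∑ i, θ i = 1)

/-- PL marginal probability of the ranked top-`l` order
`σ 0 ≻ σ 1 ≻ ⋯ ≻ σ (l-1) ≻ others` under the parameter `θ`. -/
noncomputable def PLtop {m l : ℕ} (θ : Fin m → ℝ) (σ : Fin l → Fin m) : ℝ :=
  ∏ p : Fin l, θ (σ p) / (1 - ∑ q ∈ univ.filter (fun q : Fin l => q < p), θ (σ q))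

/-- The mixing measure `α δ_{θ₁} + (1-α) δ_{θ₂}` of a 2-mixture, represented as the
finitely supported weight function on the parameter space. -/
noncomputable def mixing2 {m : ℕ} (α : ℝ) (θ1 θ2 : Fin m → ℝ) : (Fin m → ℝ) → ℝ :=
  fun t => (if θ1 = t then α else 0) + (if θ2 = t then 1 - α else 0)





lemma PLtop_pair {m : ℕ} (θ : Fin m → ℝ) (i j : Fin m) :
    PLtop θ ![i, j] = θ i * (θ j / (1 - θ i)) := by
  rw [PLtop, Fin.prod_univ_two]
  have h0 : (univ.filter (fun q : Fin 2 => q < 0)) = ∅ := by decide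
  have h1 : (univ.filter (fun q : Fin 2 => q < 1)) = {0} := by decide
  rw [h0, h1]
  simp

lemma pair_inj {m : ℕ} {i j : Fin m} (h : i ≠ j) : Function.Injective ![i, j] := by
  intro a b hab
  fin_cases a <;> fin_cases b <;> simp_all <;> exact absurd hab.symm h

lemma exists_ne3 {m : ℕ} (hm : 4 ≤ m) (a b c : Fin m) : ∃ d : Fin m, d ≠ a ∧ d ≠ b ∧ d ≠ c := by
  have hcard : ({a, b, c} : Finset (Fin m)).card < (univ : Finset (Fin m)).card := by
    calc ({a, b, c} : Finset (Fin m)).card ≤ 3 := by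
          apply le_trans (card_insert_le _ _)
          simp [card_insert_le]
          exact lt_of_le_of_lt (card_insert_le _ _) (by simp)
      _ < m := by omega
      _ = (univ : Finset (Fin m)).card := by simp
  have hne : ({a, b, c} : Finset (Fin m)) ≠ univ := fun h => by rw [h] at hcard; exact lt_irrefl _ hcard
  obtain ⟨d, _, hd⟩ := Finset.exists_of_ssubset (Finset.ssubset_univ_iff.mpr hne)
  refine ⟨d, ?_, ?_, ?_⟩ <;> (intro h; apply hd; simp [h])

lemma exists_ne2 {m : ℕ} (hm : 4 ≤ m) (a b : Fin m) : ∃ d : Fin m, d ≠ a ∧ d ≠ b := by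
  obtain ⟨d, h1, h2, _⟩ := exists_ne3 hm a b b; exact ⟨d, h1, h2⟩

lemma exists_ne1 {m : ℕ} (hm : 4 ≤ m) (a : Fin m) : ∃ d : Fin m, d ≠ a := by
  obtain ⟨d, h1, _⟩ := exists_ne2 hm a a; exact ⟨d, h1⟩

lemma PL_lt_one {m : ℕ} (hm : 4 ≤ m) {θ : Fin m → ℝ} (hθ : IsPLParam θ) (i : Fin m) :
    θ i < 1 := by
  obtain ⟨d, hd⟩ := exists_ne1 hm i
  have hsum := hθ.2
  have h1 : θ i + θ d ≤ ∑ k, θ k := by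
    calc θ i + θ d = ∑ k ∈ ({i, d} : Finset (Fin m)), θ k := by
          rw [sum_insert (by simp [Ne.symm hd]), sum_singleton]
      _ ≤ ∑ k, θ k := sum_le_sum_of_subset_of_nonneg (subset_univ _) (fun k _ _ => (hθ.1 k).le)
  nlinarith [hθ.1 d]

lemma PL_sum_erase {m : ℕ} {θ : Fin m → ℝ} (hθ : IsPLParam θ) (i : Fin m) :
    ∑ j ∈ univ.erase i, θ j = 1 - θ i := by
  have := hθ.2
  rw [← Finset.add_sum_erase univ θ (mem_univ i)] at this
  linarith

lemma PL_topsum {m : ℕ} {θ : Fin m → ℝ} (hθ : IsPLParam θ) (i : Fin m) (hlt : θ i < 1) :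
    θ i * (∑ j ∈ univ.erase i, θ j / (1 - θ i)) = θ i := by
  have hne : (1 : ℝ) - θ i ≠ 0 := by linarith
  rw [← Finset.sum_div, PL_sum_erase hθ i]
  field_simp


/-- 3 distinct points, functions 1, 1/(1-t), 1/(1-M t): kernel trivial. -/
lemma three_pt (M a b c c1 c2 c3 : ℝ) (hM : 2 ≤ M)
    (hab : a ≠ b) (hac : a ≠ c) (hbc : b ≠ c)
    (h0 : c1 + c2 + c3 = 0)
    (hP : c1*((1-b)*(1-c)) + c2*((1-a)*(1-c)) + c3*((1-a)*(1-b)) = 0)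
    (hQ : c1*((1-M*b)*(1-M*c)) + c2*((1-M*a)*(1-M*c)) + c3*((1-M*a)*(1-M*b)) = 0) :
    c1 = 0 := by
  have hM0 : M ≠ 0 := by linarith
  have hM1 : M - 1 ≠ 0 := by intro h; nlinarith
  have hD : -(M*(M-1)*(a-b)*(a-c)*(b-c)) ≠ 0 := by
    simp only [neg_ne_zero]
    exact mul_ne_zero (mul_ne_zero (mul_ne_zero (mul_ne_zero hM0 hM1) (sub_ne_zero.mpr hab)) (sub_ne_zero.mpr hac)) (sub_ne_zero.mpr hbc)
  have key : c1 * -(M*(M-1)*(a-b)*(a-c)*(b-c)) = 0 := by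
    linear_combination ((1-a)*(1-c)*(1-M*a)*(1-M*b) - (1-a)*(1-b)*(1-M*a)*(1-M*c)) * h0
      + (-((1-M*a)*(1-M*b)-(1-M*a)*(1-M*c))) * hP + ((1-a)*(1-b)-(1-a)*(1-c)) * hQ
  rcases mul_eq_zero.mp key with h | h
  · exact h
  · exact absurd h hD

/-- 4 distinct points, functions 1, t, 1/(1-t), 1/(1-M t): kernel trivial. -/
lemma four_pt (M a b c d c1 c2 c3 c4 : ℝ) (hM : 2 ≤ M)
    (hab : a ≠ b) (hac : a ≠ c) (had : a ≠ d) (hbc : b ≠ c) (hbd : b ≠ d) (hcd : c ≠ d)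
    (h0 : c1 + c2 + c3 + c4 = 0)
    (h1 : c1*a + c2*b + c3*c + c4*d = 0)
    (hP : c1*((1-b)*(1-c)*(1-d)) + c2*((1-a)*(1-c)*(1-d)) + c3*((1-a)*(1-b)*(1-d)) + c4*((1-a)*(1-b)*(1-c)) = 0)
    (hQ : c1*((1-M*b)*(1-M*c)*(1-M*d)) + c2*((1-M*a)*(1-M*c)*(1-M*d)) + c3*((1-M*a)*(1-M*b)*(1-M*d)) + c4*((1-M*a)*(1-M*b)*(1-M*c)) = 0) :
    c1 = 0 := by
  have hM0 : M ≠ 0 := by linarith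
  have hM1 : M - 1 ≠ 0 := by intro h; nlinarith
  have hD : M*M*(M-1)*(a-b)*(a-c)*(a-d)*(b-c)*(b-d)*(c-d) ≠ 0 := by
    exact mul_ne_zero (mul_ne_zero (mul_ne_zero (mul_ne_zero (mul_ne_zero (mul_ne_zero (mul_ne_zero
      (mul_ne_zero hM0 hM0) hM1) (sub_ne_zero.mpr hab)) (sub_ne_zero.mpr hac)) (sub_ne_zero.mpr had))
      (sub_ne_zero.mpr hbc)) (sub_ne_zero.mpr hbd)) (sub_ne_zero.mpr hcd)
  have key : c1 * (M*M*(M-1)*(a-b)*(a-c)*(a-d)*(b-c)*(b-d)*(c-d)) = 0 := by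
    linear_combination
      (b*(((1-a)*(1-b)*(1-d))*((1-M*a)*(1-M*b)*(1-M*c)) - ((1-a)*(1-b)*(1-c))*((1-M*a)*(1-M*b)*(1-M*d)))
        - c*(((1-a)*(1-c)*(1-d))*((1-M*a)*(1-M*b)*(1-M*c)) - ((1-a)*(1-b)*(1-c))*((1-M*a)*(1-M*c)*(1-M*d)))
        + d*(((1-a)*(1-c)*(1-d))*((1-M*a)*(1-M*b)*(1-M*d)) - ((1-a)*(1-b)*(1-d))*((1-M*a)*(1-M*c)*(1-M*d)))) * h0
      + (-((((1-a)*(1-b)*(1-d))*((1-M*a)*(1-M*b)*(1-M*c)) - ((1-a)*(1-b)*(1-c))*((1-M*a)*(1-M*b)*(1-M*d)))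
        - (((1-a)*(1-c)*(1-d))*((1-M*a)*(1-M*b)*(1-M*c)) - ((1-a)*(1-b)*(1-c))*((1-M*a)*(1-M*c)*(1-M*d)))
        + (((1-a)*(1-c)*(1-d))*((1-M*a)*(1-M*b)*(1-M*d)) - ((1-a)*(1-b)*(1-d))*((1-M*a)*(1-M*c)*(1-M*d))))) * h1
      + ((((1-M*a)*(1-M*c)*(1-M*d)) * (d - c)) + (((1-M*a)*(1-M*b)*(1-M*d)) * (b - d)) + (((1-M*a)*(1-M*b)*(1-M*c)) * (c - b))) * hP
      + (-((((1-a)*(1-c)*(1-d)) * (d - c)) + (((1-a)*(1-b)*(1-d)) * (b - d)) + (((1-a)*(1-b)*(1-c)) * (c - b)))) * hQ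
  rcases mul_eq_zero.mp key with h | h
  · exact h
  · exact absurd h hD

/-- Identifiability of a 2-point mixture on the line from the moments
`1`, `t`, `1/(1-t)`, `1/(1-M t)`. -/
lemma oneD (M A A' X Y X' Y' : ℝ) (hM : 2 ≤ M)
    (hA : 0 < A) (hA1 : A < 1) (hA' : 0 < A') (hA1' : A' < 1)
    (hX : 0 < 1 - X) (hXM : 0 < 1 - M*X)
    (hY : 0 < 1 - Y) (hYM : 0 < 1 - M*Y)
    (hX' : 0 < 1 - X') (hXM' : 0 < 1 - M*X')
    (hY' : 0 < 1 - Y') (hYM' : 0 < 1 - M*Y')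
    (hXY : X ≠ Y)
    (S1 : A*X + (1-A)*Y = A'*X' + (1-A')*Y')
    (S2 : A/(1-X) + (1-A)/(1-Y) = A'/(1-X') + (1-A')/(1-Y'))
    (S3 : A/(1-M*X) + (1-A)/(1-M*Y) = A'/(1-M*X') + (1-A')/(1-M*Y')) :
    (A = A' ∧ X = X' ∧ Y = Y') ∨ (A = 1-A' ∧ X = Y' ∧ Y = X') := by
  have hXne := hX.ne'
  have hYne := hY.ne'
  have hXne' := hX'.ne'
  have hYne' := hY'.ne'
  have hXMne := hXM.ne'
  have hYMne := hYM.ne'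
  have hXMne' := hXM'.ne'
  have hYMne' := hYM'.ne'
  have hXYs : X - Y ≠ 0 := sub_ne_zero.mpr hXY
  have S2c : A*((1-Y)*((1-X')*(1-Y'))) + (1-A)*((1-X)*((1-X')*(1-Y')))
      = A'*((1-Y')*((1-X)*(1-Y))) + (1-A')*((1-X')*((1-X)*(1-Y))) := by
    field_simp at S2; linear_combination S2
  have S3c : A*((1-M*Y)*((1-M*X')*(1-M*Y'))) + (1-A)*((1-M*X)*((1-M*X')*(1-M*Y')))
      = A'*((1-M*Y')*((1-M*X)*(1-M*Y))) + (1-A')*((1-M*X')*((1-M*X)*(1-M*Y))) := by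
    field_simp at S3; linear_combination S3
  -- helper to cancel a nonzero factor from an equation of the form  f * g = 0
  have cancel : ∀ f g : ℝ, f * g = 0 → f ≠ 0 → g = 0 := by
    intro f g hfg hf
    rcases mul_eq_zero.mp hfg with h | h
    · exact absurd h hf
    · exact h
  by_cases h1 : X = X'
  · by_cases h2 : Y = Y'
    · rw [← h1, ← h2] at S2c
      have key : (A - A')*(X - Y) = 0 := by
        apply cancel ((1-X)*(1-Y)); · linear_combination S2c
        exact mul_ne_zero hXne hYne
      rcases mul_eq_zero.mp key with h | h
      · exact Or.inl ⟨by linarith [sub_eq_zero.mp h], h1, h2⟩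
      · exact absurd h hXYs
    · by_cases h3 : Y' = X
      · exfalso
        rw [← h1, h3] at S2c
        have key : (1-A)*(Y - X) = 0 := by
          apply cancel ((1-X)*(1-X)); · linear_combination S2c
          exact mul_ne_zero hXne hXne
        rcases mul_eq_zero.mp key with h | h
        · nlinarith
        · exact hXY (sub_eq_zero.mp h).symm
      · exfalso
        rw [← h1] at S2c S3c
        have hYX : Y ≠ X := fun h => hXY h.symm
        have hXY' : X ≠ Y' := fun h => h3 h.symm
        have := three_pt M Y X Y' (1-A) (A-A') (-(1-A')) hM hYX h2 hXY'
          (by ring)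
          (by apply cancel (1-X); · linear_combination S2c
              exact hXne)
          (by apply cancel (1-M*X); · linear_combination S3c
              exact hXMne)
        nlinarith
  · by_cases h4 : X = Y'
    · by_cases h5 : Y = X'
      · rw [← h4, ← h5] at S2c
        have key : (A - (1-A'))*(X - Y) = 0 := by
          apply cancel ((1-X)*(1-Y)); · linear_combination S2c
          exact mul_ne_zero hXne hYne
        rcases mul_eq_zero.mp key with h | h
        · exact Or.inr ⟨by linarith [sub_eq_zero.mp h], h4, h5⟩
        · exact absurd h hXYs
      · exfalso
        rw [← h4] at S2c S3c
        have hYX : Y ≠ X := fun h => hXY h.symm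
        have := three_pt M Y X X' (1-A) (A-(1-A')) (-A') hM hYX h5 h1
          (by ring)
          (by apply cancel (1-X); · linear_combination S2c
              exact hXne)
          (by apply cancel (1-M*X); · linear_combination S3c
              exact hXMne)
        nlinarith
    · by_cases h6 : Y = X'
      · by_cases h7 : Y' = Y
        · exfalso
          rw [← h6, h7] at S2c
          have key : A*(X - Y) = 0 := by
            apply cancel ((1-Y)*(1-Y)); · linear_combination S2c
            exact mul_ne_zero hYne hYne
          rcases mul_eq_zero.mp key with h | h
          · exact hA.ne' h
          · exact absurd h hXYs
        · exfalso
          rw [← h6] at S2c S3c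
          have hYY' : Y ≠ Y' := fun h => h7 h.symm
          have := three_pt M X Y Y' A ((1-A)-A') (-(1-A')) hM hXY h4 hYY'
            (by ring)
            (by apply cancel (1-Y); · linear_combination S2c
                exact hYne)
            (by apply cancel (1-M*Y); · linear_combination S3c
                exact hYMne)
          exact hA.ne' this
      · by_cases h8 : Y = Y'
        · exfalso
          rw [← h8] at S2c S3c
          have := three_pt M X Y X' A ((1-A)-(1-A')) (-A') hM hXY h1 h6
            (by ring)
            (by apply cancel (1-Y); · linear_combination S2c
                exact hYne)
            (by apply cancel (1-M*Y); · linear_combination S3c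
                exact hYMne)
          exact hA.ne' this
        · by_cases h9 : X' = Y'
          · exfalso
            rw [h9] at S2c S3c
            have := three_pt M X Y Y' A (1-A) (-1) hM hXY h4 h8
              (by ring)
              (by apply cancel (1-Y'); · linear_combination S2c
                  exact hYne')
              (by apply cancel (1-M*Y'); · linear_combination S3c
                  exact hYMne')
            exact hA.ne' this
          · exfalso
            have := four_pt M X Y X' Y' A (1-A) (-A') (-(1-A')) hM
              hXY h1 h4 h6 h8 h9
              (by ring)
              (by linear_combination S1)
              (by linear_combination S2c)
              (by linear_combination S3c)
            exact hA.ne' this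


lemma mix_swap {m : ℕ} (α α' : ℝ) (θ1 θ2 : Fin m → ℝ) (hA : α' = 1 - α) :
    mixing2 α θ1 θ2 = mixing2 α' θ2 θ1 := by
  funext t
  simp only [mixing2]
  subst hA
  by_cases h1 : θ1 = t <;> by_cases h2 : θ2 = t <;> simp [h1, h2] <;> ring

lemma mix_deg {m : ℕ} (α α' : ℝ) (θ1 θ2 θ1' θ2' : Fin m → ℝ)
    (h2 : θ2 = θ1) (h3 : θ1' = θ1) (h4 : θ2' = θ1) :
    mixing2 α θ1 θ2 = mixing2 α' θ1' θ2' := by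
  funext t
  simp only [mixing2, h2, h3, h4]
  by_cases h : θ1 = t <;> simp [h]


/-- **Identifiability of 2-PL from ranked top-2 plus 2-way data** (Theorem 2(b)):
over `m ≥ 4` alternatives, if two 2-PL parameters assign the same marginal
probability to every ranked top-2 order `a_i ≻ a_j ≻ others` and to every
2-way order `a_i ≻ a_j` (probability `θ_i/(θ_i+θ_j)`), then their mixing
measures coincide. -/
theorem twoPL_identifiable_top2_2way
    (m : ℕ) (hm : 4 ≤ m)
    (α α' : ℝ) (hα : 0 < α ∧ α < 1) (hα' : 0 < α' ∧ α' < 1)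
    (θ1 θ2 θ1' θ2' : Fin m → ℝ)
    (hθ1 : IsPLParam θ1) (hθ2 : IsPLParam θ2)
    (hθ1' : IsPLParam θ1') (hθ2' : IsPLParam θ2')
    (htop2 : ∀ σ : Fin 2 → Fin m, Function.Injective σ →
      α * PLtop θ1 σ + (1 - α) * PLtop θ2 σ
        = α' * PLtop θ1' σ + (1 - α') * PLtop θ2' σ)
    (hway2 : ∀ i j : Fin m, i ≠ j →
      α * (θ1 i / (θ1 i + θ1 j)) + (1 - α) * (θ2 i / (θ2 i + θ2 j))
        = α' * (θ1' i / (θ1' i + θ1' j)) + (1 - α') * (θ2' i / (θ2' i + θ2' j))) :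
    mixing2 α θ1 θ2 = mixing2 α' θ1' θ2' := by
  obtain ⟨hα0, hα1⟩ := hα
  obtain ⟨hα'0, hα'1⟩ := hα'
  have hx1 : ∀ i, θ1 i < 1 := PL_lt_one hm hθ1
  have hx2 : ∀ i, θ2 i < 1 := PL_lt_one hm hθ2
  have hx1' : ∀ i, θ1' i < 1 := PL_lt_one hm hθ1'
  have hx2' : ∀ i, θ2' i < 1 := PL_lt_one hm hθ2'
  have hd1 : ∀ i, (1:ℝ) - θ1 i ≠ 0 := fun i => sub_ne_zero.mpr (hx1 i).ne'
  have hd2 : ∀ i, (1:ℝ) - θ2 i ≠ 0 := fun i => sub_ne_zero.mpr (hx2 i).ne'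
  have hd1' : ∀ i, (1:ℝ) - θ1' i ≠ 0 := fun i => sub_ne_zero.mpr (hx1' i).ne'
  have hd2' : ∀ i, (1:ℝ) - θ2' i ≠ 0 := fun i => sub_ne_zero.mpr (hx2' i).ne'
  have hp1 : ∀ i, (0:ℝ) < 1 - θ1 i := fun i => by have := hx1 i; linarith
  have hp2 : ∀ i, (0:ℝ) < 1 - θ2 i := fun i => by have := hx2 i; linarith
  have hp1' : ∀ i, (0:ℝ) < 1 - θ1' i := fun i => by have := hx1' i; linarith
  have hp2' : ∀ i, (0:ℝ) < 1 - θ2' i := fun i => by have := hx2' i; linarith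
  have L1 : ∀ i j : Fin m, i ≠ j →
      α * (θ1 i * (θ1 j / (1 - θ1 i))) + (1-α) * (θ2 i * (θ2 j / (1 - θ2 i)))
        = α' * (θ1' i * (θ1' j / (1 - θ1' i))) + (1-α') * (θ2' i * (θ2' j / (1 - θ2' i))) := by
    intro i j hij
    have := htop2 ![i,j] (pair_inj hij)
    simpa [PLtop_pair] using this
  have L2 : ∀ i, α * θ1 i + (1-α) * θ2 i = α' * θ1' i + (1-α') * θ2' i := by
    intro i
    have hsum : ∑ j ∈ univ.erase i,
          (α * (θ1 i * (θ1 j / (1 - θ1 i))) + (1-α) * (θ2 i * (θ2 j / (1 - θ2 i))))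
        = ∑ j ∈ univ.erase i,
          (α' * (θ1' i * (θ1' j / (1 - θ1' i))) + (1-α') * (θ2' i * (θ2' j / (1 - θ2' i)))) :=
      Finset.sum_congr rfl (fun j hj => L1 i j (Ne.symm (Finset.ne_of_mem_erase hj)))
    rw [Finset.sum_add_distrib, Finset.sum_add_distrib] at hsum
    simp only [← Finset.mul_sum] at hsum
    rw [PL_topsum hθ1 i (hx1 i), PL_topsum hθ2 i (hx2 i),
        PL_topsum hθ1' i (hx1' i), PL_topsum hθ2' i (hx2' i)] at hsum
    exact hsum
  set s : Fin m → ℝ := fun j => α * θ1 j + (1-α) * θ2 j with hs_def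
  set p : Fin m → ℝ := fun j => θ1 j - θ2 j with hp_def
  set r : Fin m → ℝ := fun j => θ1' j - θ2' j with hr_def
  have hs_pos : ∀ j, 0 < s j := fun j => by
    have h1 := hθ1.1 j; have h2 := hθ2.1 j
    simp only [hs_def]; nlinarith
  have hs_lt : ∀ j, s j < 1 := fun j => by
    have h1 := hx1 j; have h2 := hx2 j
    simp only [hs_def]; nlinarith
  have hsum_s : ∑ j, s j = 1 := by
    simp only [hs_def]
    rw [Finset.sum_add_distrib, ← Finset.mul_sum, ← Finset.mul_sum, hθ1.2, hθ2.2]; ring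
  have hsum_p : ∑ j, p j = 0 := by
    simp only [hp_def]
    rw [Finset.sum_sub_distrib, hθ1.2, hθ2.2]; ring
  have hsum_r : ∑ j, r j = 0 := by
    simp only [hr_def]
    rw [Finset.sum_sub_distrib, hθ1'.2, hθ2'.2]; ring
  have hx_s : ∀ j, θ1 j = s j + (1-α) * p j := fun j => by
    simp only [hs_def, hp_def]; ring
  have hy_s : ∀ j, θ2 j = s j - α * p j := fun j => by
    simp only [hs_def, hp_def]; ring
  have hx'_s : ∀ j, θ1' j = s j + (1-α') * r j := fun j => by
    simp only [hs_def, hr_def]; linear_combination -L2 j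
  have hy'_s : ∀ j, θ2' j = s j - α' * r j := fun j => by
    simp only [hs_def, hr_def]; linear_combination -L2 j
  by_cases htriv : ∀ j, p j = 0 ∧ r j = 0
  · apply mix_deg
    · funext j
      have := (htriv j).1; simp only [hp_def] at this; linarith
    · funext j
      have e1 := hx_s j; have e2 := hx'_s j
      have h1 := (htriv j).1; have h2 := (htriv j).2
      rw [h1] at e1; rw [h2] at e2
      linarith
    · funext j
      have e1 := hx_s j; have e2 := hy'_s j
      have h1 := (htriv j).1; have h2 := (htriv j).2
      rw [h1] at e1; rw [h2] at e2
      linarith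
  obtain ⟨j0, hj0⟩ := not_forall.mp htriv
  rw [not_and_or] at hj0
  set Ep : Fin m → ℝ := fun i =>
    (α * θ1 i * (1 - θ2 i) + (1-α) * θ2 i * (1 - θ1 i)) * ((1 - θ1' i) * (1 - θ2' i))
    - (α' * θ1' i * (1 - θ2' i) + (1-α') * θ2' i * (1 - θ1' i)) * ((1 - θ1 i) * (1 - θ2 i))
    with hEp_def
  set Fp : Fin m → ℝ := fun i =>
    α * (1-α) * (θ1 i - θ2 i) * ((1 - θ1' i) * (1 - θ2' i)) with hFp_def
  set Gp : Fin m → ℝ := fun i =>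
    α' * (1-α') * (θ1' i - θ2' i) * ((1 - θ1 i) * (1 - θ2 i)) with hGp_def
  have hME : ∀ i j, i ≠ j → s j * Ep i + p j * Fp i - r j * Gp i = 0 := by
    intro i j hij
    have l1 := L1 i j hij
    have h2 := L2 j
    field_simp [hd1 i, hd2 i, hd1' i, hd2' i] at l1
    simp only [hEp_def, hFp_def, hGp_def, hs_def, hp_def, hr_def]
    linear_combination l1 - ((α' * θ1' i * (1 - θ2' i) + (1-α') * θ2' i * (1 - θ1' i))
      * ((1 - θ1 i) * (1 - θ2 i))) * h2
  have hFzero : ∀ i, Fp i = 0 → p i = 0 := by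
    intro i hF
    simp only [hFp_def] at hF
    simp only [hp_def]
    have ha2 : (0:ℝ) < 1 - α := by linarith
    have hne : α * (1-α) * ((1 - θ1' i) * (1 - θ2' i)) ≠ 0 :=
      mul_ne_zero (mul_ne_zero hα0.ne' ha2.ne') (mul_ne_zero (hd1' i) (hd2' i))
    have h2 : (θ1 i - θ2 i) * (α * (1-α) * ((1 - θ1' i) * (1 - θ2' i))) = 0 := by
      linear_combination hF
    rcases mul_eq_zero.mp h2 with h | h
    · exact h
    · exact absurd h hne
  have hGzero : ∀ i, Gp i = 0 → r i = 0 := by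
    intro i hG
    simp only [hGp_def] at hG
    simp only [hr_def]
    have ha2 : (0:ℝ) < 1 - α' := by linarith
    have hne : α' * (1-α') * ((1 - θ1 i) * (1 - θ2 i)) ≠ 0 :=
      mul_ne_zero (mul_ne_zero hα'0.ne' ha2.ne') (mul_ne_zero (hd1 i) (hd2 i))
    have h2 : (θ1' i - θ2' i) * (α' * (1-α') * ((1 - θ1 i) * (1 - θ2 i))) = 0 := by
      linear_combination hG
    rcases mul_eq_zero.mp h2 with h | h
    · exact h
    · exact absurd h hne
  -- Claim: the vectors (p j, r j) are pairwise collinear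
  have hcol : ∀ a b : Fin m, p a * r b = p b * r a := by
    by_contra hcon
    push_neg at hcon
    obtain ⟨jj, kk, hD⟩ := hcon
    have hjk : jj ≠ kk := by rintro rfl; exact hD rfl
    have hDne : p jj * r kk - p kk * r jj ≠ 0 := sub_ne_zero.mpr hD
    have hFG : ∀ i, i ≠ jj → i ≠ kk →
        Fp i * (p jj * r kk - p kk * r jj) = Ep i * (s kk * r jj - s jj * r kk)
        ∧ Gp i * (p jj * r kk - p kk * r jj) = Ep i * (s kk * p jj - s jj * p kk) := by
      intro i h1 h2
      constructor
      · linear_combination (r kk) * hME i jj h1 - (r jj) * hME i kk h2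
      · linear_combination (p kk) * hME i jj h1 - (p jj) * hME i kk h2
    have hEzero : ∀ i, i ≠ jj → i ≠ kk → Ep i = 0 → p i = 0 ∧ r i = 0 := by
      intro i h1 h2 hE
      obtain ⟨hF, hG⟩ := hFG i h1 h2
      rw [hE, zero_mul] at hF hG
      constructor
      · apply hFzero
        rcases mul_eq_zero.mp hF with h | h
        · exact h
        · exact absurd h hDne
      · apply hGzero
        rcases mul_eq_zero.mp hG with h | h
        · exact h
        · exact absurd h hDne
    by_cases hall : ∀ i, i ≠ jj → i ≠ kk → Ep i = 0
    · have hps : ∀ i, i ∉ ({jj, kk} : Finset (Fin m)) → p i = 0 ∧ r i = 0 := by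
        intro i hi
        simp only [Finset.mem_insert, Finset.mem_singleton, not_or] at hi
        exact hEzero i hi.1 hi.2 (hall i hi.1 hi.2)
      have hsp : p jj + p kk = 0 := by
        have h1 : ∑ i ∈ ({jj,kk} : Finset (Fin m)), p i = ∑ i, p i :=
          Finset.sum_subset (Finset.subset_univ _) (fun x _ hx => (hps x hx).1)
        rw [Finset.sum_pair hjk, hsum_p] at h1
        exact h1
      have hsr : r jj + r kk = 0 := by
        have h1 : ∑ i ∈ ({jj,kk} : Finset (Fin m)), r i = ∑ i, r i :=
          Finset.sum_subset (Finset.subset_univ _) (fun x _ hx => (hps x hx).2)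
        rw [Finset.sum_pair hjk, hsum_r] at h1
        exact h1
      apply hDne
      have e1 : p kk = -p jj := by linarith
      have e2 : r kk = -r jj := by linarith
      rw [e1, e2]; ring
    · push_neg at hall
      obtain ⟨istar, hi1, hi2, hiE⟩ := hall
      have hPhi : ∀ i', i' ≠ jj → i' ≠ kk → Ep i' ≠ 0 → ∀ l, l ≠ i' →
          s l * (p jj*r kk - p kk*r jj) + p l * (s kk*r jj - s jj*r kk)
            - r l * (s kk*p jj - s jj*p kk) = 0 := by
        intro i' h1 h2 hE l hl
        have hME1 := hME i' l (fun h => hl h.symm)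
        obtain ⟨hF, hG⟩ := hFG i' h1 h2
        have key : Ep i' * (s l * (p jj*r kk - p kk*r jj) + p l * (s kk*r jj - s jj*r kk)
            - r l * (s kk*p jj - s jj*p kk)) = 0 := by
          linear_combination (p jj*r kk - p kk*r jj) * hME1 - (p l) * hF + (r l) * hG
        rcases mul_eq_zero.mp key with h | h
        · exact absurd h hE
        · exact h
      obtain ⟨i', hi'1, hi'2, hi'3⟩ := exists_ne3 hm jj kk istar
      by_cases hEi' : Ep i' = 0
      · obtain ⟨hp0, hr0⟩ := hEzero i' hi'1 hi'2 hEi'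
        have h0 := hPhi istar hi1 hi2 hiE i' hi'3
        have h2 : s i' * (p jj*r kk - p kk*r jj) = 0 := by
          linear_combination h0 - (s kk*r jj - s jj*r kk) * hp0 + (s kk*p jj - s jj*p kk) * hr0
        rcases mul_eq_zero.mp h2 with h | h
        · exact absurd h (hs_pos i').ne'
        · exact absurd h hDne
      · have hPhiAll : ∀ l, s l * (p jj*r kk - p kk*r jj) + p l * (s kk*r jj - s jj*r kk)
            - r l * (s kk*p jj - s jj*p kk) = 0 := by
          intro l
          by_cases h : l = istar
          · exact hPhi i' hi'1 hi'2 hEi' l (by rw [h]; exact fun hh => hi'3 hh.symm)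
          · exact hPhi istar hi1 hi2 hiE l h
        have hsum0 : ∑ l, (s l * (p jj*r kk - p kk*r jj) + p l * (s kk*r jj - s jj*r kk)
            - r l * (s kk*p jj - s jj*p kk)) = 0 :=
          Finset.sum_eq_zero (fun l _ => hPhiAll l)
        have hexp : ∑ l, (s l * (p jj*r kk - p kk*r jj) + p l * (s kk*r jj - s jj*r kk)
            - r l * (s kk*p jj - s jj*p kk))
            = (∑ l, s l) * (p jj*r kk - p kk*r jj) + (∑ l, p l) * (s kk*r jj - s jj*r kk)
              - (∑ l, r l) * (s kk*p jj - s jj*p kk) := by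
          rw [Finset.sum_mul, Finset.sum_mul, Finset.sum_mul, ← Finset.sum_add_distrib,
            ← Finset.sum_sub_distrib]
        rw [hexp, hsum_s, hsum_p, hsum_r, one_mul, zero_mul, zero_mul] at hsum0
        apply hDne
        linarith
  -- construct the common direction q
  obtain ⟨q, hq_pr, hq0, hq_sum⟩ :
      ∃ q : Fin m → ℝ, (∀ i, p i = q i * p j0 ∧ r i = q i * r j0) ∧ q j0 = 1 ∧ ∑ i, q i = 0 := by
    rcases hj0 with hP | hR
    · refine ⟨fun i => p i / p j0, fun i => ⟨by field_simp, ?_⟩, by field_simp, ?_⟩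
      · rw [div_mul_eq_mul_div, eq_div_iff hP]
        linear_combination -hcol i j0
      · rw [← Finset.sum_div, hsum_p, zero_div]
    · refine ⟨fun i => r i / r j0, fun i => ⟨?_, by field_simp⟩, by field_simp, ?_⟩
      · rw [div_mul_eq_mul_div, eq_div_iff hR]
        linear_combination hcol i j0
      · rw [← Finset.sum_div, hsum_r, zero_div]
  have hMEq : ∀ i l, i ≠ l → s l * Ep i + q l * (p j0 * Fp i - r j0 * Gp i) = 0 := by
    intro i l h
    have h0 := hME i l h
    have h1 := (hq_pr l).1
    have h2 := (hq_pr l).2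
    linear_combination h0 - Fp i * h1 + Gp i * h2
  have hAtMostOne : ∀ i1 i2, i1 ≠ i2 →
      (∀ l l', l ≠ i1 → l' ≠ i1 → s l * q l' = s l' * q l) →
      (∀ l l', l ≠ i2 → l' ≠ i2 → s l * q l' = s l' * q l) → False := by
    intro i1 i2 h12 hE1 hE2
    obtain ⟨a, ha1, ha2⟩ := exists_ne2 hm i1 i2
    have hglob : ∀ l, s a * q l = s l * q a := by
      intro l
      by_cases h : l = i1
      · subst h
        exact hE2 a l ha2 (fun hh => h12 hh)
      · exact hE1 a l ha1 h
    have h1 : s a * (∑ l, q l) = (∑ l, s l) * q a := by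
      rw [Finset.mul_sum, Finset.sum_mul]
      exact Finset.sum_congr rfl (fun l _ => hglob l)
    rw [hq_sum, hsum_s, mul_zero, one_mul] at h1
    have hq_all : ∀ l, q l = 0 := by
      intro l
      have h3 := hglob l
      rw [← h1, mul_zero] at h3
      rcases mul_eq_zero.mp h3 with h | h
      · exact absurd h (hs_pos a).ne'
      · exact h
    have := hq_all j0
    rw [hq0] at this
    exact one_ne_zero this
  have hdich : ∃ istar, (∀ i, i ≠ istar → p j0 * Fp i - r j0 * Gp i = 0) ∧
      ((∀ i, p j0 * Fp i - r j0 * Gp i = 0) ∨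
        ∃ lam, lam ≠ 0 ∧ ∀ l, l ≠ istar → q l = lam * s l) := by
    have hcram : ∀ i, (∃ l, ∃ l', l ≠ i ∧ l' ≠ i ∧ s l * q l' ≠ s l' * q l) →
        p j0 * Fp i - r j0 * Gp i = 0 := by
      rintro i ⟨l, l', h1, h2, h3⟩
      have e1 := hMEq i l (fun h => h1 h.symm)
      have e2 := hMEq i l' (fun h => h2 h.symm)
      have hE : Ep i * (s l * q l' - s l' * q l) = 0 := by
        linear_combination (q l') * e1 - (q l) * e2
      have hE0 : Ep i = 0 := by
        rcases mul_eq_zero.mp hE with h | h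
        · exact h
        · exact absurd h (sub_ne_zero.mpr h3)
      rw [hE0, mul_zero, zero_add] at e1 e2
      by_cases hql : q l = 0
      · have hql' : q l' ≠ 0 := by
          intro h
          apply h3
          rw [hql, h]; ring
        rcases mul_eq_zero.mp e2 with h | h
        · exact absurd h hql'
        · exact h
      · rcases mul_eq_zero.mp e1 with h | h
        · exact absurd h hql
        · exact h
    by_cases hexc : ∃ i, ∀ l l', l ≠ i → l' ≠ i → s l * q l' = s l' * q l
    · obtain ⟨istar, hist⟩ := hexc
      refine ⟨istar, ?_, Or.inr ?_⟩
      · intro i hi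
        apply hcram
        by_contra hno
        push_neg at hno
        exact hAtMostOne istar i (fun h => hi h.symm) hist hno
      · obtain ⟨a, ha⟩ := exists_ne1 hm istar
        by_cases hsa : q a = 0
        · exfalso
          have hzero : ∀ l, l ≠ istar → q l = 0 := by
            intro l hl
            have h4 := hist a l ha hl
            rw [hsa, mul_zero] at h4
            rcases mul_eq_zero.mp h4 with h | h
            · exact absurd h (hs_pos a).ne'
            · exact h
          have hstar0 : q istar = 0 := by
            have h1 : ∑ l, q l = q istar := by
              rw [← Finset.add_sum_erase univ q (mem_univ istar),
                Finset.sum_eq_zero (fun l hl => hzero l (Finset.ne_of_mem_erase hl)), add_zero]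
            rw [hq_sum] at h1
            exact h1.symm
          by_cases hj0star : j0 = istar
          · rw [hj0star, hstar0] at hq0
            exact zero_ne_one hq0
          · have := hzero j0 hj0star
            rw [hq0] at this
            exact one_ne_zero this
        · refine ⟨q a / s a, div_ne_zero hsa (hs_pos a).ne', ?_⟩
          intro l hl
          have h4 := hist a l ha hl
          rw [div_mul_eq_mul_div, eq_div_iff (hs_pos a).ne']
          linear_combination h4
    · push_neg at hexc
      refine ⟨j0, fun i _ => ?_, Or.inl fun i => ?_⟩ <;>
      · apply hcram
        obtain ⟨l, l', hll⟩ := hexc i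
        exact ⟨l, l', hll⟩
  obtain ⟨istar, hHQ0, hrig⟩ := hdich
  have hq_notall : ¬ (∀ l, l ≠ istar → q l = 0) := by
    intro hzero
    have hstar0 : q istar = 0 := by
      have h1 : ∑ l, q l = q istar := by
        rw [← Finset.add_sum_erase univ q (mem_univ istar),
          Finset.sum_eq_zero (fun l hl => hzero l (Finset.ne_of_mem_erase hl)), add_zero]
      rw [hq_sum] at h1
      exact h1.symm
    by_cases hj0star : j0 = istar
    · rw [hj0star, hstar0] at hq0
      exact zero_ne_one hq0
    · have := hzero j0 hj0star
      rw [hq0] at this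
      exact one_ne_zero this
  have hPne : p j0 ≠ 0 := by
    intro hP0
    have hR0 : r j0 ≠ 0 := by
      rcases hj0 with h | h
      · exact absurd hP0 h
      · exact h
    apply hq_notall
    intro l hl
    have h0 := hHQ0 l hl
    rw [hP0, zero_mul, zero_sub, neg_eq_zero] at h0
    have hG0 : Gp l = 0 := by
      rcases mul_eq_zero.mp h0 with h | h
      · exact absurd h hR0
      · exact h
    have hr0 := hGzero l hG0
    rw [(hq_pr l).2] at hr0
    rcases mul_eq_zero.mp hr0 with h | h
    · exact h
    · exact absurd h hR0
  have hRne : r j0 ≠ 0 := by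
    intro hR0
    apply hq_notall
    intro l hl
    have h0 := hHQ0 l hl
    rw [hR0, zero_mul, sub_zero] at h0
    have hF0 : Fp l = 0 := by
      rcases mul_eq_zero.mp h0 with h | h
      · exact absurd h hPne
      · exact h
    have hp0 := hFzero l hF0
    rw [(hq_pr l).1] at hp0
    rcases mul_eq_zero.mp hp0 with h | h
    · exact h
    · exact absurd h hPne
  have hxq : ∀ i, θ1 i = s i + (1-α)*(q i * p j0) := fun i => by
    rw [hx_s i, (hq_pr i).1]
  have hyq : ∀ i, θ2 i = s i - α*(q i * p j0) := fun i => by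
    rw [hy_s i, (hq_pr i).1]
  have hx'q : ∀ i, θ1' i = s i + (1-α')*(q i * r j0) := fun i => by
    rw [hx'_s i, (hq_pr i).2]
  have hy'q : ∀ i, θ2' i = s i - α'*(q i * r j0) := fun i => by
    rw [hy'_s i, (hq_pr i).2]
  -- the key scalar relation derived from the top-2 data
  have hstar : ∀ i, p j0 * Fp i - r j0 * Gp i = 0 → q i ≠ 0 →
      (α*(1-α)*(p j0)^2 - α'*(1-α')*(r j0)^2) * (1 - s i)
        + (p j0 * r j0 * (α*(1-α)*(p j0)*(α'-(1-α')) - α'*(1-α')*(r j0)*(α-(1-α)))) * q i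
        = 0 := by
    intro i hHQi hqi
    simp only [hFp_def, hGp_def] at hHQi
    have key : q i * (α*(1-α)*(p j0)^2*((1-θ1' i)*(1-θ2' i))
        - α'*(1-α')*(r j0)^2*((1-θ1 i)*(1-θ2 i))) = 0 := by
      have h1 := (hq_pr i).1
      have h2 := (hq_pr i).2
      simp only [hp_def, hr_def] at h1 h2
      linear_combination hHQi
        - (p j0 * (α*(1-α)) * ((1-θ1' i)*(1-θ2' i))) * h1
        + (r j0 * (α'*(1-α')) * ((1-θ1 i)*(1-θ2 i))) * h2
    have key1 : α*(1-α)*(p j0)^2*((1-θ1' i)*(1-θ2' i))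
        - α'*(1-α')*(r j0)^2*((1-θ1 i)*(1-θ2 i)) = 0 := by
      rcases mul_eq_zero.mp key with h | h
      · exact absurd h hqi
      · exact h
    rw [hxq i, hyq i, hx'q i, hy'q i] at key1
    have key3 : (1 - s i) * ((α*(1-α)*(p j0)^2 - α'*(1-α')*(r j0)^2) * (1 - s i)
        + (p j0 * r j0 * (α*(1-α)*(p j0)*(α'-(1-α')) - α'*(1-α')*(r j0)*(α-(1-α)))) * q i) = 0 := by
      linear_combination key1
    rcases mul_eq_zero.mp key3 with h | h
    · exfalso
      have := hs_lt i
      have h2 : s i = 1 := by linarith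
      linarith
    · exact h
  by_cases hAB : (α*(1-α)*(p j0)^2 - α'*(1-α')*(r j0)^2 = 0)
      ∧ (p j0 * r j0 * (α*(1-α)*(p j0)*(α'-(1-α')) - α'*(1-α')*(r j0)*(α-(1-α))) = 0)
  · obtain ⟨hA0, hB0⟩ := hAB
    have hB0' : α*(1-α)*(p j0)*(α'-(1-α')) = α'*(1-α')*(r j0)*(α-(1-α)) := by
      have hPR : p j0 * r j0 ≠ 0 := mul_ne_zero hPne hRne
      have h2 : (p j0 * r j0) * (α*(1-α)*(p j0)*(α'-(1-α'))
          - α'*(1-α')*(r j0)*(α-(1-α))) = 0 := by linear_combination hB0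
      rcases mul_eq_zero.mp h2 with h | h
      · exact absurd h hPR
      · linarith
    have hkey1 : r j0 * (2*α'-1) = p j0 * (2*α-1) := by
      have h2 : α*(1-α)*(p j0) * (r j0*(2*α'-1) - p j0*(2*α-1)) = 0 := by
        linear_combination (r j0)*hB0' - (α-(1-α))*hA0
      have hne : α*(1-α)*(p j0) ≠ 0 := by
        have ha2 : (0:ℝ) < 1 - α := by linarith
        exact mul_ne_zero (mul_ne_zero hα0.ne' ha2.ne') hPne
      rcases mul_eq_zero.mp h2 with h | h
      · exact absurd h hne
      · linarith
    have hsq : (r j0 - p j0) * (r j0 + p j0) = 0 := by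
      linear_combination (r j0*(2*α'-1) + p j0*(2*α-1))*hkey1 - 4*hA0
    rcases mul_eq_zero.mp hsq with hcase | hcase
    · have hRP : r j0 = p j0 := by linarith
      have haa : α' = α := by
        rw [hRP] at hkey1
        have h2 : p j0 * ((2*α'-1) - (2*α-1)) = 0 := by linear_combination hkey1
        rcases mul_eq_zero.mp h2 with h | h
        · exact absurd h hPne
        · linarith
      have hth1 : θ1' = θ1 := funext fun i => by
        rw [hx'q i, hxq i, haa, hRP]
      have hth2 : θ2' = θ2 := funext fun i => by
        rw [hy'q i, hyq i, haa, hRP]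
      rw [hth1, hth2, haa]
    · have hRP : r j0 = -p j0 := by linarith
      have haa : α' = 1 - α := by
        rw [hRP] at hkey1
        have h2 : p j0 * ((2*α'-1) + (2*α-1)) = 0 := by linear_combination -hkey1
        rcases mul_eq_zero.mp h2 with h | h
        · exact absurd h hPne
        · linarith
      have hth1 : θ1' = θ2 := funext fun i => by
        rw [hx'q i, hyq i, haa, hRP]; ring
      have hth2 : θ2' = θ1 := funext fun i => by
        rw [hy'q i, hxq i, haa, hRP]; ring
      rw [hth1, hth2]
      exact mix_swap α α' θ1 θ2 haa
  · rcases hrig with hall | ⟨lam, hlam, hlq⟩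
    · -- every index satisfies the star relation: contradiction with ¬(A=0∧B=0)
      exfalso
      by_cases hB : p j0 * r j0 * (α*(1-α)*(p j0)*(α'-(1-α')) - α'*(1-α')*(r j0)*(α-(1-α))) = 0
      · have hA : α*(1-α)*(p j0)^2 - α'*(1-α')*(r j0)^2 ≠ 0 := fun h => hAB ⟨h, hB⟩
        apply hq_notall
        intro l _
        by_contra hql
        have h1 := hstar l (hall l) hql
        have h2 : (α*(1-α)*(p j0)^2 - α'*(1-α')*(r j0)^2) * (1 - s l) = 0 := by
          linear_combination h1 - (q l)*hB
        rcases mul_eq_zero.mp h2 with h | h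
        · exact hA h
        · have := hs_lt l; linarith
      · have hnn : ∀ i, 0 ≤ (-(α*(1-α)*(p j0)^2 - α'*(1-α')*(r j0)^2)
            / (p j0 * r j0 * (α*(1-α)*(p j0)*(α'-(1-α')) - α'*(1-α')*(r j0)*(α-(1-α))))) * q i := by
          intro i
          by_cases hqi : q i = 0
          · rw [hqi, mul_zero]
          · have h1 := hstar i (hall i) hqi
            have h2 : q i = (-(α*(1-α)*(p j0)^2 - α'*(1-α')*(r j0)^2)
                / (p j0 * r j0 * (α*(1-α)*(p j0)*(α'-(1-α')) - α'*(1-α')*(r j0)*(α-(1-α))))) * (1 - s i) := by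
              rw [eq_comm, div_mul_eq_mul_div, div_eq_iff hB]
              linear_combination -h1
            rw [h2, ← mul_assoc]
            apply mul_nonneg (mul_self_nonneg _)
            have := hs_lt i
            linarith
        have hsum0 : ∑ i, (-(α*(1-α)*(p j0)^2 - α'*(1-α')*(r j0)^2)
            / (p j0 * r j0 * (α*(1-α)*(p j0)*(α'-(1-α')) - α'*(1-α')*(r j0)*(α-(1-α))))) * q i = 0 := by
          rw [← Finset.mul_sum, hq_sum, mul_zero]
        have hz := (Finset.sum_eq_zero_iff_of_nonneg (fun i _ => hnn i)).mp hsum0 j0 (mem_univ j0)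
        rw [hq0, mul_one] at hz
        have hA0 : α*(1-α)*(p j0)^2 - α'*(1-α')*(r j0)^2 = 0 := by
          rcases div_eq_zero_iff.mp hz with h | h
          · linarith
          · exact absurd h hB
        have h1 := hstar j0 (hall j0) (by rw [hq0]; exact one_ne_zero)
        rw [hA0, hq0, zero_mul, zero_add, mul_one] at h1
        exact hB h1
    · -- RIGID scenario
      have hqnz : ∀ l, l ≠ istar → q l ≠ 0 := fun l hl => by
        rw [hlq l hl]
        exact mul_ne_zero hlam (hs_pos l).ne'
      have hstar' : ∀ l, l ≠ istar →
          (α*(1-α)*(p j0)^2 - α'*(1-α')*(r j0)^2) * (1 - s l)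
          + (p j0 * r j0 * (α*(1-α)*(p j0)*(α'-(1-α')) - α'*(1-α')*(r j0)*(α-(1-α)))) * (lam * s l) = 0 := by
        intro l hl
        have h1 := hstar l (hHQ0 l hl) (hqnz l hl)
        rw [hlq l hl] at h1
        exact h1
      have hsc : ∀ l l', l ≠ istar → l' ≠ istar → s l = s l' := by
        intro l l' h1 h2
        have e1 := hstar' l h1
        have e2 := hstar' l' h2
        have h3 : ((p j0 * r j0 * (α*(1-α)*(p j0)*(α'-(1-α')) - α'*(1-α')*(r j0)*(α-(1-α))))*lam
            - (α*(1-α)*(p j0)^2 - α'*(1-α')*(r j0)^2)) * (s l - s l') = 0 := by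
          linear_combination e1 - e2
        rcases mul_eq_zero.mp h3 with h | h
        · exfalso
          have hA0 : α*(1-α)*(p j0)^2 - α'*(1-α')*(r j0)^2 = 0 := by
            linear_combination e1 - (s l)*h
          have hB0 : p j0 * r j0 * (α*(1-α)*(p j0)*(α'-(1-α')) - α'*(1-α')*(r j0)*(α-(1-α))) = 0 := by
            have h5 : (p j0 * r j0 * (α*(1-α)*(p j0)*(α'-(1-α')) - α'*(1-α')*(r j0)*(α-(1-α)))) * lam = 0 := by
              linear_combination h + hA0
            rcases mul_eq_zero.mp h5 with h6 | h6
            · exact h6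
            · exact absurd h6 hlam
          exact hAB ⟨hA0, hB0⟩
        · linarith
      obtain ⟨j1, hj1⟩ := exists_ne1 hm istar
      obtain ⟨j2, hj2i, hj2j1⟩ := exists_ne2 hm istar j1
      have hcx : ∀ l, l ≠ istar → θ1 l = θ1 j1 := by
        intro l hl
        rw [hxq l, hxq j1, hlq l hl, hlq j1 hj1, hsc l j1 hl hj1]
      have hcy : ∀ l, l ≠ istar → θ2 l = θ2 j1 := by
        intro l hl
        rw [hyq l, hyq j1, hlq l hl, hlq j1 hj1, hsc l j1 hl hj1]
      have hcx' : ∀ l, l ≠ istar → θ1' l = θ1' j1 := by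
        intro l hl
        rw [hx'q l, hx'q j1, hlq l hl, hlq j1 hj1, hsc l j1 hl hj1]
      have hcy' : ∀ l, l ≠ istar → θ2' l = θ2' j1 := by
        intro l hl
        rw [hy'q l, hy'q j1, hlq l hl, hlq j1 hj1, hsc l j1 hl hj1]
      have hsum_fun : ∀ (θ : Fin m → ℝ), (∑ i, θ i = 1) → (∀ l, l ≠ istar → θ l = θ j1) →
          θ istar = 1 - ((m:ℝ)-1) * θ j1 := by
        intro θ hsum hc
        have h1 : ∑ l ∈ univ.erase istar, θ l = ((m:ℝ)-1) * θ j1 := by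
          rw [Finset.sum_congr rfl (fun l hl => hc l (Finset.ne_of_mem_erase hl)),
            Finset.sum_const, Finset.card_erase_of_mem (mem_univ istar), Finset.card_univ,
            Fintype.card_fin, nsmul_eq_mul]
          congr 1
          push_cast [Nat.cast_sub (by omega : 1 ≤ m)]
          ring
        have h2 := Finset.add_sum_erase univ θ (mem_univ istar)
        rw [h1, hsum] at h2
        linarith
      have hX_i : θ1 istar = 1 - ((m:ℝ)-1)*θ1 j1 := hsum_fun θ1 hθ1.2 hcx
      have hY_i : θ2 istar = 1 - ((m:ℝ)-1)*θ2 j1 := hsum_fun θ2 hθ2.2 hcy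
      have hX'_i : θ1' istar = 1 - ((m:ℝ)-1)*θ1' j1 := hsum_fun θ1' hθ1'.2 hcx'
      have hY'_i : θ2' istar = 1 - ((m:ℝ)-1)*θ2' j1 := hsum_fun θ2' hθ2'.2 hcy'
      have hm4 : (4:ℝ) ≤ (m:ℝ) := by exact_mod_cast hm
      have hM'2 : 2 ≤ (m:ℝ) - 2 := by linarith
      have hden1 : 1 - ((m:ℝ)-2)*θ1 j1 = θ1 j1 + θ1 istar := by rw [hX_i]; ring
      have hden2 : 1 - ((m:ℝ)-2)*θ2 j1 = θ2 j1 + θ2 istar := by rw [hY_i]; ring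
      have hden1' : 1 - ((m:ℝ)-2)*θ1' j1 = θ1' j1 + θ1' istar := by rw [hX'_i]; ring
      have hden2' : 1 - ((m:ℝ)-2)*θ2' j1 = θ2' j1 + θ2' istar := by rw [hY'_i]; ring
      have hXY : θ1 j1 ≠ θ2 j1 := by
        have hpne : p j1 ≠ 0 := by
          rw [(hq_pr j1).1]
          exact mul_ne_zero (hqnz j1 hj1) hPne
        simp only [hp_def] at hpne
        exact sub_ne_zero.mp hpne
      have S1 : α*θ1 j1 + (1-α)*θ2 j1 = α'*θ1' j1 + (1-α')*θ2' j1 := L2 j1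
      have T3 := L1 j1 j2 (fun h => hj2j1 h.symm)
      rw [hcx j2 hj2i, hcy j2 hj2i, hcx' j2 hj2i, hcy' j2 hj2i] at T3
      have S2 : α/(1-θ1 j1) + (1-α)/(1-θ2 j1) = α'/(1-θ1' j1) + (1-α')/(1-θ2' j1) := by
        field_simp [hd1 j1, hd2 j1, hd1' j1, hd2' j1] at T3 ⊢
        linear_combination T3 + ((1-θ1 j1)*(1-θ2 j1)*(1-θ1' j1)*(1-θ2' j1))*S1
      have PW := hway2 j1 istar hj1
      rw [← hden1, ← hden2, ← hden1', ← hden2'] at PW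
      have hdp1 : (0:ℝ) < 1 - ((m:ℝ)-2)*θ1 j1 := by
        rw [hden1]; have := hθ1.1 j1; have := hθ1.1 istar; linarith
      have hdp2 : (0:ℝ) < 1 - ((m:ℝ)-2)*θ2 j1 := by
        rw [hden2]; have := hθ2.1 j1; have := hθ2.1 istar; linarith
      have hdp1' : (0:ℝ) < 1 - ((m:ℝ)-2)*θ1' j1 := by
        rw [hden1']; have := hθ1'.1 j1; have := hθ1'.1 istar; linarith
      have hdp2' : (0:ℝ) < 1 - ((m:ℝ)-2)*θ2' j1 := by
        rw [hden2']; have := hθ2'.1 j1; have := hθ2'.1 istar; linarith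
      have S3 : α/(1-((m:ℝ)-2)*θ1 j1) + (1-α)/(1-((m:ℝ)-2)*θ2 j1)
          = α'/(1-((m:ℝ)-2)*θ1' j1) + (1-α')/(1-((m:ℝ)-2)*θ2' j1) := by
        have key : ∀ a x : ℝ, 1-((m:ℝ)-2)*x ≠ 0 →
            a/(1-((m:ℝ)-2)*x) = a + ((m:ℝ)-2)*(a*(x/(1-((m:ℝ)-2)*x))) := by
          intro a x hx
          simp only [div_eq_mul_inv]
          linear_combination a * mul_inv_cancel₀ hx
        rw [key α _ hdp1.ne', key (1-α) _ hdp2.ne', key α' _ hdp1'.ne', key (1-α') _ hdp2'.ne']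
        linear_combination ((m:ℝ)-2) * PW
      have hres := oneD ((m:ℝ)-2) α α' (θ1 j1) (θ2 j1) (θ1' j1) (θ2' j1) hM'2
        hα0 hα1 hα'0 hα'1 (hp1 j1) hdp1 (hp2 j1) hdp2 (hp1' j1) hdp1' (hp2' j1) hdp2'
        hXY S1 S2 S3
      have hq1 : q j1 ≠ 0 := hqnz j1 hj1
      rcases hres with ⟨hAa, hXX, hYY⟩ | ⟨hAa, hXY', hYX'⟩
      · have hc1 : (1-α')*(r j0) = (1-α)*(p j0) := by
          have h0 := hXX
          rw [hxq j1, hx'q j1] at h0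
          have h2 : q j1 * ((1-α)*p j0 - (1-α')*r j0) = 0 := by linear_combination h0
          rcases mul_eq_zero.mp h2 with h | h
          · exact absurd h hq1
          · linarith
        have hc2 : α'*(r j0) = α*(p j0) := by
          have h0 := hYY
          rw [hyq j1, hy'q j1] at h0
          have h2 : q j1 * (α'*r j0 - α*p j0) = 0 := by linear_combination h0
          rcases mul_eq_zero.mp h2 with h | h
          · exact absurd h hq1
          · linarith
        have hth1 : θ1' = θ1 := funext fun i => by
          rw [hx'q i, hxq i]
          linear_combination (q i) * hc1
        have hth2 : θ2' = θ2 := funext fun i => by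
          rw [hy'q i, hyq i]
          linear_combination -(q i) * hc2
        rw [hth1, hth2, ← hAa]
      · have hc1 : (1-α)*(p j0) = -(α'*(r j0)) := by
          have h0 := hXY'
          rw [hxq j1, hy'q j1] at h0
          have h2 : q j1 * ((1-α)*p j0 + α'*r j0) = 0 := by linear_combination h0
          rcases mul_eq_zero.mp h2 with h | h
          · exact absurd h hq1
          · linarith
        have hc2 : -(α*(p j0)) = (1-α')*(r j0) := by
          have h0 := hYX'
          rw [hyq j1, hx'q j1] at h0
          have h2 : q j1 * ((1-α')*r j0 + α*p j0) = 0 := by linear_combination -h0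
          rcases mul_eq_zero.mp h2 with h | h
          · exact absurd h hq1
          · linarith
        have hth1 : θ1' = θ2 := funext fun i => by
          rw [hx'q i, hyq i]
          linear_combination -(q i) * hc2
        have hth2 : θ2' = θ1 := funext fun i => by
          rw [hy'q i, hxq i]
          linear_combination -(q i) * hc1
        have haa : α' = 1 - α := by linarith
        rw [hth1, hth2]
        exact mix_swap α α' θ1 θ2 haa
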